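/- Let ȳ be as in Example 2.5 (the piecewise sextic function on [-1,1] defined by ȳ(x) = -(1/2)(x+1) + (1/2)(x+1)³ + (1/12)(1-x²)³ for x ≤ 0 and the reflected formula for x ≥ 0). Then for every z ∈ H²(-1,1) with z(-1)=z(1)=0, ∫_{-1}^{1} ȳ'' z'' dx = 6 z'(0) + ∫_{-1}^{1} 6(1 - 5x²) z dx. -/

import Mathlib

open MeasureTheory Set

/-- The second derivative of the exact solution `ȳ` of Example 2.5. -/
noncomputable def ybarD'' (x : ℝ) : ℝ :=
  if x ≤ 0 then 3*(x+1) - (1/2)*(1 - 6*x^2 + 5*x^4)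
  else 3*(x-1) - (1/2)*(1 - 6*x^2 + 5*x^4)

noncomputable def fm (x : ℝ) : ℝ := 3*(x+1) - (1/2)*(1 - 6*x^2 + 5*x^4)
noncomputable def fp (x : ℝ) : ℝ := 3*(x-1) - (1/2)*(1 - 6*x^2 + 5*x^4)
noncomputable def g (x : ℝ) : ℝ := 3 + 6*x - 10*x^3

lemma fm_cont : Continuous fm := by unfold fm; continuity
lemma fp_cont : Continuous fp := by unfold fp; continuity
lemma g_cont : Continuous g := by unfold g; continuity

lemma fm_deriv (x : ℝ) : HasDerivAt fm (g x) x := by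
  have h := (((hasDerivAt_id x).add_const 1).const_mul 3).sub
    ((((hasDerivAt_const x (1:ℝ)).sub ((hasDerivAt_pow 2 x).const_mul 6)).add
      ((hasDerivAt_pow 4 x).const_mul 5)).const_mul (1/2))
  refine h.congr_deriv ?_
  unfold g; push_cast; ring

lemma fp_deriv (x : ℝ) : HasDerivAt fp (g x) x := by
  have h := (((hasDerivAt_id x).sub_const 1).const_mul 3).sub
    ((((hasDerivAt_const x (1:ℝ)).sub ((hasDerivAt_pow 2 x).const_mul 6)).add
      ((hasDerivAt_pow 4 x).const_mul 5)).const_mul (1/2))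
  refine h.congr_deriv ?_
  unfold g; push_cast; ring

lemma g_deriv (x : ℝ) : HasDerivAt g (6*(1 - 5*x^2)) x := by
  have h := (((hasDerivAt_id x).const_mul 6).const_add 3).sub
    ((hasDerivAt_pow 3 x).const_mul 10)
  refine h.congr_deriv ?_
  push_cast; ring

/-- Identity (2.21): for every `z ∈ H²(-1,1)` with `z(-1) = z(1) = 0`,
`∫ ȳ'' z'' = 6 z'(0) + ∫ 6(1-5x²) z`. -/
theorem example_dirichlet_multiplier_identity
    (z z1 z2 : ℝ → ℝ)
    (hz : ContinuousOn z (Set.Icc (-1:ℝ) 1))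
    (hz1 : ∀ x ∈ Set.Icc (-1:ℝ) 1, HasDerivWithinAt z (z1 x) (Set.Icc (-1:ℝ) 1) x)
    (hz1c : ContinuousOn z1 (Set.Icc (-1:ℝ) 1))
    (hz2 : ∀ x ∈ Set.Icc (-1:ℝ) 1, HasDerivWithinAt z1 (z2 x) (Set.Icc (-1:ℝ) 1) x)
    (hz2int : IntervalIntegrable z2 MeasureTheory.volume (-1:ℝ) 1)
    (hbc1 : z (-1) = 0) (hbc2 : z 1 = 0) :
    ∫ x in (-1:ℝ)..1, ybarD'' x * z2 x =
      6 * z1 0 + ∫ x in (-1:ℝ)..1, 6*(1 - 5*x^2) * z x := by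
  have hsub1 : Set.uIcc (-1:ℝ) 0 ⊆ Set.Icc (-1:ℝ) 1 := by
    rw [Set.uIcc_of_le (by norm_num : (-1:ℝ) ≤ 0)]
    exact Set.Icc_subset_Icc le_rfl (by norm_num)
  have hsub2 : Set.uIcc (0:ℝ) 1 ⊆ Set.Icc (-1:ℝ) 1 := by
    rw [Set.uIcc_of_le (by norm_num : (0:ℝ) ≤ 1)]
    exact Set.Icc_subset_Icc (by norm_num) le_rfl
  have hzd : ∀ x ∈ Set.Ioo (-1:ℝ) 1, HasDerivAt z (z1 x) x := fun x hx =>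
    (hz1 x (Set.Ioo_subset_Icc_self hx)).hasDerivAt (Icc_mem_nhds hx.1 hx.2)
  have hz1d : ∀ x ∈ Set.Ioo (-1:ℝ) 1, HasDerivAt z1 (z2 x) x := fun x hx =>
    (hz2 x (Set.Ioo_subset_Icc_self hx)).hasDerivAt (Icc_mem_nhds hx.1 hx.2)
  have hz2mL : IntervalIntegrable z2 volume (-1) 0 := by
    apply hz2int.mono_set
    rw [Set.uIcc_of_le (by norm_num : (-1:ℝ) ≤ 0), Set.uIcc_of_le (by norm_num : (-1:ℝ) ≤ 1)]
    exact Set.Icc_subset_Icc le_rfl (by norm_num)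
  have hz2mR : IntervalIntegrable z2 volume 0 1 := by
    apply hz2int.mono_set
    rw [Set.uIcc_of_le (by norm_num : (0:ℝ) ≤ 1), Set.uIcc_of_le (by norm_num : (-1:ℝ) ≤ 1)]
    exact Set.Icc_subset_Icc (by norm_num) le_rfl
  have hz1iL : IntervalIntegrable z1 volume (-1) 0 := (hz1c.mono hsub1).intervalIntegrable
  have hz1iR : IntervalIntegrable z1 volume 0 1 := (hz1c.mono hsub2).intervalIntegrable
  have hooL : Set.Ioo (min (-1:ℝ) 0) (max (-1:ℝ) 0) ⊆ Set.Ioo (-1:ℝ) 1 := by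
    rw [show min (-1:ℝ) 0 = -1 by norm_num, show max (-1:ℝ) 0 = 0 by norm_num]
    exact Set.Ioo_subset_Ioo le_rfl (by norm_num)
  have hooR : Set.Ioo (min (0:ℝ) 1) (max (0:ℝ) 1) ⊆ Set.Ioo (-1:ℝ) 1 := by
    rw [show min (0:ℝ) 1 = 0 by norm_num, show max (0:ℝ) 1 = 1 by norm_num]
    exact Set.Ioo_subset_Ioo (by norm_num) le_rfl
  -- integration by parts, left interval
  have ib1 : ∫ x in (-1:ℝ)..0, fm x * z2 x
      = fm 0 * z1 0 - fm (-1) * z1 (-1) - ∫ x in (-1:ℝ)..0, g x * z1 x :=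
    intervalIntegral.integral_mul_deriv_eq_deriv_mul_of_hasDerivAt
      fm_cont.continuousOn (hz1c.mono hsub1) (fun x _ => fm_deriv x)
      (fun x hx => hz1d x (hooL hx)) (g_cont.intervalIntegrable _ _) hz2mL
  have ib2 : ∫ x in (-1:ℝ)..0, g x * z1 x
      = g 0 * z 0 - g (-1) * z (-1) - ∫ x in (-1:ℝ)..0, (6*(1 - 5*x^2)) * z x :=
    intervalIntegral.integral_mul_deriv_eq_deriv_mul_of_hasDerivAt
      g_cont.continuousOn (hz.mono hsub1) (fun x _ => g_deriv x)
      (fun x hx => hzd x (hooL hx))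
      ((continuous_const.mul (continuous_const.sub (continuous_const.mul (continuous_pow 2)) : Continuous fun x:ℝ => 1 - 5*x^2)).intervalIntegrable _ _) hz1iL
  -- integration by parts, right interval
  have ib3 : ∫ x in (0:ℝ)..1, fp x * z2 x
      = fp 1 * z1 1 - fp 0 * z1 0 - ∫ x in (0:ℝ)..1, g x * z1 x :=
    intervalIntegral.integral_mul_deriv_eq_deriv_mul_of_hasDerivAt
      fp_cont.continuousOn (hz1c.mono hsub2) (fun x _ => fp_deriv x)
      (fun x hx => hz1d x (hooR hx)) (g_cont.intervalIntegrable _ _) hz2mR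
  have ib4 : ∫ x in (0:ℝ)..1, g x * z1 x
      = g 1 * z 1 - g 0 * z 0 - ∫ x in (0:ℝ)..1, (6*(1 - 5*x^2)) * z x :=
    intervalIntegral.integral_mul_deriv_eq_deriv_mul_of_hasDerivAt
      g_cont.continuousOn (hz.mono hsub2) (fun x _ => g_deriv x)
      (fun x hx => hzd x (hooR hx))
      ((continuous_const.mul (continuous_const.sub (continuous_const.mul (continuous_pow 2)) : Continuous fun x:ℝ => 1 - 5*x^2)).intervalIntegrable _ _) hz1iR
  -- identify integrands
  have congL : ∫ x in (-1:ℝ)..0, ybarD'' x * z2 x = ∫ x in (-1:ℝ)..0, fm x * z2 x := by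
    apply intervalIntegral.integral_congr
    intro x hx
    rw [Set.uIcc_of_le (by norm_num : (-1:ℝ) ≤ 0)] at hx
    simp only [ybarD'', fm, if_pos hx.2]
  have aeR : ∀ᵐ x ∂(volume : Measure ℝ), x ∈ Set.uIoc (0:ℝ) 1 → ybarD'' x * z2 x = fp x * z2 x := by
    filter_upwards with x hx
    rw [Set.uIoc_of_le (by norm_num : (0:ℝ) ≤ 1)] at hx
    simp only [ybarD'', fp, if_neg (not_le.mpr hx.1)]
  have congR : ∫ x in (0:ℝ)..1, ybarD'' x * z2 x = ∫ x in (0:ℝ)..1, fp x * z2 x :=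
    intervalIntegral.integral_congr_ae aeR
  -- integrability for splitting
  have hiL : IntervalIntegrable (fun x => ybarD'' x * z2 x) volume (-1) 0 := by
    apply ((hz2mL.continuousOn_mul fm_cont.continuousOn)).congr_ae
    refine (MeasureTheory.ae_restrict_iff' measurableSet_uIoc).2 ?_
    filter_upwards with x hx
    rw [Set.uIoc_of_le (by norm_num : (-1:ℝ) ≤ 0)] at hx
    simp only [ybarD'', fm, if_pos hx.2]
  have hiR : IntervalIntegrable (fun x => ybarD'' x * z2 x) volume 0 1 := by
    apply ((hz2mR.continuousOn_mul fp_cont.continuousOn)).congr_ae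
    refine (MeasureTheory.ae_restrict_iff' measurableSet_uIoc).2 ?_
    filter_upwards with x hx
    rw [Set.uIoc_of_le (by norm_num : (0:ℝ) ≤ 1)] at hx
    simp only [ybarD'', fp, if_neg (not_le.mpr hx.1)]
  have hwL : IntervalIntegrable (fun x => 6*(1 - 5*x^2) * z x) volume (-1) 0 :=
    ((hz.mono hsub1).intervalIntegrable).continuousOn_mul ((continuous_const.mul (continuous_const.sub (continuous_const.mul (continuous_pow 2)) : Continuous fun x:ℝ => 1 - 5*x^2)).continuousOn)
  have hwR : IntervalIntegrable (fun x => 6*(1 - 5*x^2) * z x) volume 0 1 :=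
    ((hz.mono hsub2).intervalIntegrable).continuousOn_mul ((continuous_const.mul (continuous_const.sub (continuous_const.mul (continuous_pow 2)) : Continuous fun x:ℝ => 1 - 5*x^2)).continuousOn)
  have split1 : ∫ x in (-1:ℝ)..1, ybarD'' x * z2 x
      = (∫ x in (-1:ℝ)..0, ybarD'' x * z2 x) + ∫ x in (0:ℝ)..1, ybarD'' x * z2 x :=
    (intervalIntegral.integral_add_adjacent_intervals hiL hiR).symm
  have split2 : ∫ x in (-1:ℝ)..1, 6*(1 - 5*x^2) * z x
      = (∫ x in (-1:ℝ)..0, 6*(1 - 5*x^2) * z x) + ∫ x in (0:ℝ)..1, 6*(1 - 5*x^2) * z x :=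
    (intervalIntegral.integral_add_adjacent_intervals hwL hwR).symm
  have vfm0 : fm 0 = 5/2 := by norm_num [fm]
  have vfmm1 : fm (-1) = 0 := by norm_num [fm]
  have vfp0 : fp 0 = -7/2 := by norm_num [fp]
  have vfp1 : fp 1 = 0 := by norm_num [fp]
  have vg0 : g 0 = 3 := by norm_num [g]
  have vgm1 : g (-1) = 7 := by norm_num [g]
  have vg1 : g 1 = -1 := by norm_num [g]
  rw [split1, split2, congL, congR, ib1, ib3, ib2, ib4, vfm0, vfmm1, vfp0, vfp1, vg0, vgm1,
    vg1, hbc1, hbc2]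
  ring
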